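/- Let H be a subgroup of a group G, let g ∈ G and y ∈ ⟨H, H^g⟩. If H^y and H^g are conjugate in ⟨H^y, H^g⟩, then H and H^g are conjugate in ⟨H, H^g⟩. -/
import Mathlib


/-- The conjugate subgroup `g H g⁻¹`. -/
def conjSub {G : Type*} [Group G] (g : G) (H : Subgroup G) : Subgroup G :=
  H.map (MulAut.conj g).toMonoidHom

/-- `H` is pronormal in `G`: for every `g`, `H` and `H^g` are conjugate in `⟨H, H^g⟩`. -/
def IsPronormal {G : Type*} [Group G] (H : Subgroup G) : Prop :=
  ∀ g : G, ∃ x ∈ H ⊔ conjSub g H, conjSub x H = conjSub g H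

/-- `n` is a `π`-number: all its prime divisors lie in `π`. -/
def IsPiNumber (π : Set ℕ) (n : ℕ) : Prop :=
  ∀ p : ℕ, p.Prime → p ∣ n → p ∈ π

/-- `n` is a `π'`-number: none of its prime divisors lies in `π`. -/
def IsPiPrimeNumber (π : Set ℕ) (n : ℕ) : Prop :=
  ∀ p : ℕ, p.Prime → p ∣ n → p ∉ π

/-- `H` is a `π`-Hall subgroup: its order is a `π`-number and its index a `π'`-number. -/
def IsHall {G : Type*} [Group G] (π : Set ℕ) (H : Subgroup G) : Prop :=
  IsPiNumber π (Nat.card H) ∧ IsPiPrimeNumber π H.index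

/-- A group is `π`-separable if it has a normal series each of whose factors is a
`π`-group or a `π'`-group. -/
def IsPiSeparable (π : Set ℕ) (G : Type*) [Group G] : Prop :=
  ∃ n : ℕ, ∃ s : Fin (n + 1) → Subgroup G,
    Monotone s ∧ s 0 = ⊥ ∧ s (Fin.last n) = ⊤ ∧
    (∀ i, (s i).Normal) ∧
    ∀ i : Fin n,
      IsPiNumber π (Nat.card (s i.succ) / Nat.card (s i.castSucc)) ∨
      IsPiPrimeNumber π (Nat.card (s i.succ) / Nat.card (s i.castSucc))

/-- The `A`-conjugacy class `{H^a : a ∈ A}` of a subgroup `H`. -/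
def conjClassOn {G : Type*} [Group G] (A : Subgroup G) (H : Subgroup G) : Set (Subgroup G) :=
  {K | ∃ a ∈ A, K = conjSub a H}

/-- The `G`-conjugacy class `{H^g : g ∈ G}` of a subgroup `H`. -/
def conjClass {G : Type*} [Group G] (H : Subgroup G) : Set (Subgroup G) :=
  {K | ∃ g : G, K = conjSub g H}
theorem stmt_5 {G : Type*} [Group G] (H : Subgroup G) (g y : G)
    (hy : y ∈ H ⊔ conjSub g H)
    (h : ∃ z ∈ conjSub y H ⊔ conjSub g H, conjSub z (conjSub y H) = conjSub g H) :
    ∃ x ∈ H ⊔ conjSub g H, conjSub x H = conjSub g H := by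
  obtain ⟨z, hz, hzy⟩ := h
  have hmul : ∀ a b : G, conjSub a (conjSub b H) = conjSub (a * b) H := by
    intro a b
    ext w
    simp [conjSub, Subgroup.mem_map, mul_assoc]
  have hle : conjSub y H ⊔ conjSub g H ≤ H ⊔ conjSub g H := by
    apply sup_le _ le_sup_right
    intro w hw
    obtain ⟨u, hu, rfl⟩ := hw
    exact mul_mem (mul_mem hy (Subgroup.mem_sup_left hu)) (inv_mem hy)
  refine ⟨z * y, mul_mem (hle hz) hy, ?_⟩
  rw [← hmul, hzy]
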